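/- arXiv:1702.07228 — 2 statements merged into one kernel-verified Lean document; each statement's English description precedes it below -/
import Mathlib

section
/- Let α, β ∈ ℝ with β > 0 and |α| < β, and choose K with |α| ≤ K ≤ 2β - |α|. For Z = (y,z,u,ξ,η) in the domain of A (so ξ = u(0) = z(0)), the real part of ⟨AZ, Z⟩ satisfies Re⟨AZ, Z⟩ ≤ (1/2)[(-2β + |α| + K)|z(0)|² + (|α| - K)|u(1)|²] ≤ 0. Hence if Re⟨AZ, Z⟩ = 0 then z(0) = 0 and u(1) = 0. -/
/-- Dissipativity estimate: with `ξ = u(0) = z(0)`, the quantity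
`Re⟨AZ,Z⟩ = Re(α ξ ū(1)) - (K/2)|u(1)|² + (K/2)|u(0)|² - β|ξ|²` satisfies
`Re⟨AZ,Z⟩ ≤ (1/2)[(-2β+|α|+K)|z(0)|² + (|α|-K)|u(1)|²] ≤ 0`; hence, under the
strict inequalities `|α| < K < 2β - |α|`, `Re⟨AZ,Z⟩ = 0` forces
`z(0) = 0` and `u(1) = 0`. -/
theorem stmt12 (α β K : ℝ) (hβ : 0 < β) (hαβ : |α| < β)
    (hK1 : |α| ≤ K) (hK2 : K ≤ 2 * β - |α|)
    (z0 u1 : ℂ) (ξ : ℂ) (hξ : ξ = z0) (R : ℝ)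
    (hR : R = ((α : ℂ) * ξ * (starRingEnd ℂ) u1).re
        - K / 2 * ‖u1‖ ^ 2 + K / 2 * ‖ξ‖ ^ 2 - β * ‖ξ‖ ^ 2) :
    R ≤ 1 / 2 * ((-2 * β + |α| + K) * ‖z0‖ ^ 2 + (|α| - K) * ‖u1‖ ^ 2) ∧
      1 / 2 * ((-2 * β + |α| + K) * ‖z0‖ ^ 2 + (|α| - K) * ‖u1‖ ^ 2) ≤ 0 ∧
      (|α| < K → K < 2 * β - |α| → R = 0 → z0 = 0 ∧ u1 = 0) := by
  subst hξ hR
  have h1 : ((α : ℂ) * ξ * (starRingEnd ℂ) u1).re ≤ |α| * ‖ξ‖ * ‖u1‖ := by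
    calc ((α : ℂ) * ξ * (starRingEnd ℂ) u1).re
        ≤ ‖(α : ℂ) * ξ * (starRingEnd ℂ) u1‖ := Complex.re_le_norm _
      _ = |α| * ‖ξ‖ * ‖u1‖ := by
          simp [Complex.norm_conj, Complex.norm_real]
  have ha : (0:ℝ) ≤ ‖ξ‖ := norm_nonneg _
  have hb : (0:ℝ) ≤ ‖u1‖ := norm_nonneg _
  have hbound : ((α : ℂ) * ξ * (starRingEnd ℂ) u1).re
      - K / 2 * ‖u1‖ ^ 2 + K / 2 * ‖ξ‖ ^ 2 - β * ‖ξ‖ ^ 2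
      ≤ 1 / 2 * ((-2 * β + |α| + K) * ‖ξ‖ ^ 2 + (|α| - K) * ‖u1‖ ^ 2) := by
    nlinarith [sq_nonneg (‖ξ‖ - ‖u1‖), abs_nonneg α]
  have hS : 1 / 2 * ((-2 * β + |α| + K) * ‖ξ‖ ^ 2 + (|α| - K) * ‖u1‖ ^ 2) ≤ 0 := by
    nlinarith [sq_nonneg ‖ξ‖, sq_nonneg ‖u1‖]
  refine ⟨hbound, hS, fun h2 h3 h4 => ?_⟩
  have hz : ‖ξ‖ ^ 2 = 0 := by nlinarith [sq_nonneg ‖ξ‖, sq_nonneg ‖u1‖]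
  have hu : ‖u1‖ ^ 2 = 0 := by nlinarith [sq_nonneg ‖ξ‖, sq_nonneg ‖u1‖]
  constructor
  · simpa using pow_eq_zero_iff (n := 2) (by norm_num) |>.mp hz
  · simpa using pow_eq_zero_iff (n := 2) (by norm_num) |>.mp hu
end

section
/- Let y: [0,1] × [0,∞) → ℝ be a smooth solution of y_tt = (a y_x)_x on (0,1) with boundary dynamics m y_tt(0,t) = (a y_x)(0,t) - β y_t(0,t) + α y_t(0,t-τ) and M y_tt(1,t) = -(a y_x)(1,t). Then the quantity ρ(t) = ∫₀¹ y_t(x,t) dx + m y_t(0,t) + M y_t(1,t) + ατ ∫₀¹ y_t(0, t - xτ) dx + (β - α) y(0,t) is constant in time. -/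
open MeasureTheory Set intervalIntegral

/-- Conservation of `ρ(t) = ∫₀¹ y_t dx + m y_t(0,t) + M y_t(1,t)
+ ατ ∫₀¹ y_t(0,t-xτ) dx + (β-α) y(0,t)` for smooth solutions of the
overhead crane system with delayed boundary control. -/
theorem stmt13 (a : ℝ → ℝ) (a₀ m M τ α β : ℝ)
    (ha₀ : 0 < a₀) (haLB : ∀ x ∈ Icc (0:ℝ) 1, a₀ ≤ a x)
    (hm : 0 < m) (hM : 0 < M) (hτ : 0 < τ) (hβ : 0 < β)
    (y yt ytt yx w : ℝ → ℝ → ℝ)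
    (hyt : ∀ x ∈ Icc (0:ℝ) 1, ∀ t : ℝ, HasDerivAt (fun s => y x s) (yt x t) t)
    (hytt : ∀ x ∈ Icc (0:ℝ) 1, ∀ t : ℝ, HasDerivAt (fun s => yt x s) (ytt x t) t)
    (hyx : ∀ t : ℝ, ∀ x ∈ Icc (0:ℝ) 1, HasDerivAt (fun s => y s t) (yx x t) x)
    (hw : ∀ t : ℝ, ∀ x ∈ Icc (0:ℝ) 1,
      HasDerivAt (fun s => a s * yx s t) (w x t) x)
    (hytCont : Continuous fun p : ℝ × ℝ => yt p.1 p.2)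
    (hyttCont : Continuous fun p : ℝ × ℝ => ytt p.1 p.2)
    (hwave : ∀ t > (0:ℝ), ∀ x ∈ Ioo (0:ℝ) 1, ytt x t = w x t)
    (hbc0 : ∀ t > (0:ℝ),
      m * ytt 0 t = a 0 * yx 0 t - β * yt 0 t + α * yt 0 (t - τ))
    (hbc1 : ∀ t > (0:ℝ), M * ytt 1 t = -(a 1 * yx 1 t)) :
    ∀ t ≥ (0:ℝ),
      (∫ x in (0:ℝ)..1, yt x t) + m * yt 0 t + M * yt 1 t
          + α * τ * (∫ x in (0:ℝ)..1, yt 0 (t - x * τ)) + (β - α) * y 0 t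
        = (∫ x in (0:ℝ)..1, yt x 0) + m * yt 0 0 + M * yt 1 0
          + α * τ * (∫ x in (0:ℝ)..1, yt 0 (-(x * τ))) + (β - α) * y 0 0 := by
  intro t ht
  have h01 : (0:ℝ) ∈ Icc (0:ℝ) 1 := by norm_num
  have h11 : (1:ℝ) ∈ Icc (0:ℝ) 1 := by norm_num
  -- continuity of various slices
  have hslice : ∀ c : ℝ, Continuous fun u => yt c u :=
    fun c => hytCont.comp (continuous_const.prodMk continuous_id)
  have hslicett : ∀ c : ℝ, Continuous fun u => ytt c u :=
    fun c => hyttCont.comp (continuous_const.prodMk continuous_id)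
  have hfc : Continuous fun u => yt 0 u := hslice 0
  have hfint : ∀ u v : ℝ, IntervalIntegrable (fun u => yt 0 u) volume u v :=
    fun u v => hfc.intervalIntegrable u v
  -- FTC in time
  have hft : ∀ x ∈ Icc (0:ℝ) 1, yt x t - yt x 0 = ∫ s in (0:ℝ)..t, ytt x s := by
    intro x hx
    exact (integral_eq_sub_of_hasDerivAt (fun s _ => hytt x hx s)
      ((hslicett x).intervalIntegrable 0 t)).symm
  -- boundary ODE pieces
  have h2 : m * yt 0 t - m * yt 0 0 = ∫ s in (0:ℝ)..t, m * ytt 0 s := by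
    rw [intervalIntegral.integral_const_mul, ← hft 0 h01]; ring
  have h3 : M * yt 1 t - M * yt 1 0 = ∫ s in (0:ℝ)..t, M * ytt 1 s := by
    rw [intervalIntegral.integral_const_mul, ← hft 1 h11]; ring
  have h5 : (β - α) * y 0 t - (β - α) * y 0 0 = ∫ s in (0:ℝ)..t, (β - α) * yt 0 s := by
    have hy0 : y 0 t - y 0 0 = ∫ s in (0:ℝ)..t, yt 0 s :=
      (integral_eq_sub_of_hasDerivAt (fun s _ => hyt 0 h01 s) (hfint 0 t)).symm
    rw [intervalIntegral.integral_const_mul, ← hy0]; ring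
  -- delay substitution
  have hdel : ∀ r : ℝ, α * τ * (∫ x in (0:ℝ)..1, yt 0 (r - x * τ))
      = α * ∫ u in (r - τ)..r, yt 0 u := by
    intro r
    have e1 : (∫ x in (0:ℝ)..1, (fun z => yt 0 (r - z)) (x * τ))
        = τ⁻¹ • ∫ z in (0:ℝ) * τ..1 * τ, yt 0 (r - z) :=
      integral_comp_mul_right (fun z => yt 0 (r - z)) hτ.ne'
    have e2 : (∫ z in (0:ℝ) * τ..1 * τ, yt 0 (r - z))
        = ∫ u in r - 1 * τ..r - 0 * τ, yt 0 u :=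
      integral_comp_sub_left (fun u => yt 0 u) r
    simp only [zero_mul, one_mul, sub_zero] at e1 e2
    rw [e1, e2, smul_eq_mul]
    field_simp
  -- delay difference identity
  have hadd1 := integral_add_adjacent_intervals (hfint (t - τ) 0) (hfint 0 t)
  have hadd2 := integral_add_adjacent_intervals (hfint (-τ) (t - τ)) (hfint (t - τ) 0)
  have hshift : (∫ s in (0:ℝ)..t, yt 0 (s - τ)) = ∫ u in (0:ℝ) - τ..t - τ, yt 0 u :=
    integral_comp_sub_right (fun u => yt 0 u) τ
  rw [zero_sub] at hshift
  -- first term: differentiation under the integral via Fubini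
  have hxI : ∀ s : ℝ, IntervalIntegrable (fun x => yt x s) volume 0 1 :=
    fun s => (hytCont.comp (continuous_id.prodMk continuous_const)).intervalIntegrable 0 1
  have hsub1 : (∫ x in (0:ℝ)..1, yt x t) - (∫ x in (0:ℝ)..1, yt x 0)
      = ∫ x in (0:ℝ)..1, (yt x t - yt x 0) := (integral_sub (hxI t) (hxI 0)).symm
  have hcongr : (∫ x in (0:ℝ)..1, (yt x t - yt x 0))
      = ∫ x in (0:ℝ)..1, ∫ s in (0:ℝ)..t, ytt x s := by
    apply integral_congr
    intro x hx
    exact hft x (by rwa [uIcc_of_le zero_le_one] at hx)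
  have hswap : (∫ x in (0:ℝ)..1, ∫ s in (0:ℝ)..t, ytt x s)
      = ∫ s in (0:ℝ)..t, ∫ x in (0:ℝ)..1, ytt x s := by
    simp_rw [intervalIntegral.integral_of_le ht, intervalIntegral.integral_of_le zero_le_one]
    apply MeasureTheory.integral_integral_swap
    rw [Measure.prod_restrict]
    have : IntegrableOn (Function.uncurry ytt) (Icc 0 1 ×ˢ Icc 0 t) :=
      hyttCont.continuousOn.integrableOn_compact (isCompact_Icc.prod isCompact_Icc)
    exact this.mono_set (prod_mono Ioc_subset_Icc_self Ioc_subset_Icc_self)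
  -- inner spatial integral via FTC in space
  have hinner : ∀ s : ℝ, 0 < s →
      (∫ x in (0:ℝ)..1, ytt x s) = a 1 * yx 1 s - a 0 * yx 0 s := by
    intro s hs
    have hyttInt : IntegrableOn (fun x => ytt x s) (Ioo 0 1) :=
      ((hyttCont.comp (continuous_id.prodMk continuous_const)).continuousOn.integrableOn_compact
        isCompact_Icc).mono_set Ioo_subset_Icc_self
    have hwInt : IntegrableOn (fun x => w x s) (Ioo 0 1) :=
      hyttInt.congr_fun (fun x hx => hwave s hs x hx) measurableSet_Ioo
    have hwII : IntervalIntegrable (fun x => w x s) volume 0 1 := by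
      rw [intervalIntegrable_iff_integrableOn_Ioo_of_le zero_le_one]
      exact hwInt
    have hFTC : (∫ x in (0:ℝ)..1, w x s) = a 1 * yx 1 s - a 0 * yx 0 s :=
      integral_eq_sub_of_hasDerivAt
        (fun x hx => hw s x (by rwa [uIcc_of_le zero_le_one] at hx)) hwII
    have heq : (∫ x in (0:ℝ)..1, ytt x s) = ∫ x in (0:ℝ)..1, w x s := by
      rw [intervalIntegral.integral_of_le zero_le_one,
        intervalIntegral.integral_of_le zero_le_one,
        MeasureTheory.integral_Ioc_eq_integral_Ioo,
        MeasureTheory.integral_Ioc_eq_integral_Ioo]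
      exact setIntegral_congr_fun measurableSet_Ioo (fun x hx => hwave s hs x hx)
    rw [heq, hFTC]
  -- integrability of the summands in time
  have i1 : IntervalIntegrable (fun s => ∫ x in (0:ℝ)..1, ytt x s) volume 0 t :=
    (intervalIntegral.continuous_parametric_intervalIntegral_of_continuous'
      (f := fun s x => ytt x s) (hyttCont.comp continuous_swap) 0 1).intervalIntegrable 0 t
  have i2 : IntervalIntegrable (fun s => m * ytt 0 s) volume 0 t :=
    (continuous_const.mul (hslicett 0)).intervalIntegrable 0 t
  have i3 : IntervalIntegrable (fun s => M * ytt 1 s) volume 0 t :=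
    (continuous_const.mul (hslicett 1)).intervalIntegrable 0 t
  have i4 : IntervalIntegrable (fun s => α * yt 0 s - α * yt 0 (s - τ)) volume 0 t :=
    ((continuous_const.mul hfc).sub
      (continuous_const.mul (hfc.comp (continuous_id.sub continuous_const)))).intervalIntegrable 0 t
  have i5 : IntervalIntegrable (fun s => (β - α) * yt 0 s) volume 0 t :=
    (continuous_const.mul hfc).intervalIntegrable 0 t
  -- the total integrand vanishes
  have key : (∫ s in (0:ℝ)..t, ((∫ x in (0:ℝ)..1, ytt x s) + m * ytt 0 s + M * ytt 1 s
      + (α * yt 0 s - α * yt 0 (s - τ)) + (β - α) * yt 0 s)) = 0 := by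
    rw [intervalIntegral.integral_of_le ht]
    have hz : EqOn (fun s => (∫ x in (0:ℝ)..1, ytt x s) + m * ytt 0 s + M * ytt 1 s
        + (α * yt 0 s - α * yt 0 (s - τ)) + (β - α) * yt 0 s) (fun _ => (0:ℝ)) (Ioc 0 t) := by
      intro s hs
      have hs0 : (0:ℝ) < s := hs.1
      simp only
      rw [hinner s hs0, hbc0 s hs0, hbc1 s hs0]
      ring
    rw [setIntegral_congr_fun measurableSet_Ioc hz]
    simp
  -- split the vanishing integral into pieces
  have split : (∫ s in (0:ℝ)..t, ((∫ x in (0:ℝ)..1, ytt x s) + m * ytt 0 s + M * ytt 1 s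
        + (α * yt 0 s - α * yt 0 (s - τ)) + (β - α) * yt 0 s))
      = (∫ s in (0:ℝ)..t, ∫ x in (0:ℝ)..1, ytt x s) + (∫ s in (0:ℝ)..t, m * ytt 0 s)
        + (∫ s in (0:ℝ)..t, M * ytt 1 s)
        + (∫ s in (0:ℝ)..t, (α * yt 0 s - α * yt 0 (s - τ)))
        + (∫ s in (0:ℝ)..t, (β - α) * yt 0 s) := by
    rw [integral_add (((i1.add i2).add i3).add i4) i5, integral_add ((i1.add i2).add i3) i4,
      integral_add (i1.add i2) i3, integral_add i1 i2]
  -- evaluate the delay piece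
  have hdelayint : (∫ s in (0:ℝ)..t, (α * yt 0 s - α * yt 0 (s - τ)))
      = α * (∫ u in (t - τ)..t, yt 0 u) - α * (∫ u in (-τ)..(0:ℝ), yt 0 u) := by
    have i4a : IntervalIntegrable (fun s => α * yt 0 s) volume 0 t :=
      (continuous_const.mul hfc).intervalIntegrable 0 t
    have i4b : IntervalIntegrable (fun s => α * yt 0 (s - τ)) volume 0 t :=
      (continuous_const.mul (hfc.comp (continuous_id.sub continuous_const))).intervalIntegrable 0 t
    rw [integral_sub i4a i4b, intervalIntegral.integral_const_mul, intervalIntegral.integral_const_mul, hshift]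
    have : (∫ s in (0:ℝ)..t, yt 0 s) - (∫ u in (-τ)..t - τ, yt 0 u)
        = (∫ u in (t - τ)..t, yt 0 u) - (∫ u in (-τ)..(0:ℝ), yt 0 u) := by
      linarith [hadd1, hadd2]
    linear_combination α * this
  -- put everything together
  have hdelt := hdel t
  have hdel0 : α * τ * (∫ x in (0:ℝ)..1, yt 0 (-(x * τ)))
      = α * ∫ u in ((0:ℝ) - τ)..(0:ℝ), yt 0 u := by
    have : (fun x : ℝ => yt 0 (-(x * τ))) = fun x : ℝ => yt 0 (0 - x * τ) := by
      funext x; rw [zero_sub]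
    rw [this]
    exact hdel 0
  rw [zero_sub] at hdel0
  have hA : (∫ x in (0:ℝ)..1, yt x t) - (∫ x in (0:ℝ)..1, yt x 0)
      = ∫ s in (0:ℝ)..t, ∫ x in (0:ℝ)..1, ytt x s := by
    rw [hsub1, hcongr, hswap]
  rw [split] at key
  linarith [key, hA, h2, h3, h5, hdelayint, hdelt, hdel0]
end
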